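/- Let t ≥ 1 and μ be a t-core partition with indices b_0,…,b_{t−1} (b_i the least integer ≡ i mod t with z_{μ,b_i} = 1). Let λ have t-core μ and quotients (λ⁰,…,λ^{t−1}), and let λ⁺ be obtained from λ by adding one box □_i of content c to the quotient λ^i. Then the multiset of contents of λ⁺ minus the multiset of contents of λ equals {tc + b_i, tc + b_i − 1, …, tc + b_i − (t−1)}. -/

import Mathlib

open Finset

namespace PaperDefs

/-- Hook length of the box in row `i`, column `j` (0-indexed) of `μ`. -/
def hookLen (μ : YoungDiagram) (i j : ℕ) : ℕ :=
  (μ.rowLen i - j) + (μ.colLen j - i) - 1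

/-- Content of a box. -/
def content (c : ℕ × ℕ) : ℤ := (c.2 : ℤ) - (c.1 : ℤ)

/-- `z_i = 1` (horizontal edge) in the 01-sequence of `μ`; the 0's (vertical
edges) occur exactly at the positions `λ_{r+1} - (r+1) = rowLen r - (r+1)`,
which realizes the normalization `#{i ≥ 0 : z_i = 0} = #{i < 0 : z_i = 1}`. -/
def ZOne (μ : YoungDiagram) (i : ℤ) : Prop :=
  ∀ r : ℕ, i ≠ (μ.rowLen r : ℤ) - (r + 1)

/-- `μ` is a `t`-core: no hook length is divisible by `t`. -/
def IsTCore (t : ℕ) (μ : YoungDiagram) : Prop :=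
  ∀ c ∈ μ.cells, ¬ (t ∣ hookLen μ c.1 c.2)

/-- `ν` is obtained from `μ` by adding one `t`-hook: a pair
`(z_i, z_{i+t}) = (0, 1)` of the 01-sequence of `μ` is exchanged to `(1, 0)`. -/
def AddHook (t : ℕ) (μ ν : YoungDiagram) : Prop :=
  ∃ i : ℤ, ¬ ZOne μ i ∧ ZOne μ (i + (t : ℤ)) ∧
    (∀ j : ℤ, ZOne ν j ↔ (j = i ∨ (j ≠ i + (t : ℤ) ∧ ZOne μ j)))

/-- `lam ≥_t μ` : `lam` is obtained from `μ` by successively adding `t`-hooks. -/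
def GEt (t : ℕ) (μ lam : YoungDiagram) : Prop :=
  Relation.ReflTransGen (AddHook t) μ lam

/-- Number of saturated chains of `n` successive `t`-hook additions from `μ` to
`lam`; this equals `F_{λ/μ}` when `|λ/μ| = nt` and vanishes otherwise. -/
noncomputable def numChains (t n : ℕ) (μ lam : YoungDiagram) : ℕ :=
  Set.ncard {c : ℕ → YoungDiagram |
    c 0 = μ ∧ c n = lam ∧ ∀ k < n, AddHook t (c k) (c (k + 1))}

/-- `H_μ`, the product of all hook lengths of `μ`. -/
def Hprod (μ : YoungDiagram) : ℚ :=
  ∏ c ∈ μ.cells, (hookLen μ c.1 c.2 : ℚ)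

/-- `G_μ = 1 / ∏_{h ∈ 𝓗_t(μ)} h`. -/
def Gfun (t : ℕ) (μ : YoungDiagram) : ℚ :=
  1 / ∏ c ∈ μ.cells.filter (fun c => t ∣ hookLen μ c.1 c.2), (hookLen μ c.1 c.2 : ℚ)

/-- The `t`-difference operator `D_t`. -/
noncomputable def Dt (t : ℕ) (g : YoungDiagram → ℚ) (μ : YoungDiagram) : ℚ :=
  (∑ᶠ ν ∈ {ν : YoungDiagram | AddHook t μ ν}, g ν) - g μ

/-- `P_g(n) = Σ_{λ ≥_t μ, |λ/μ| = nt} F_{λ/μ} g(λ)`. -/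
noncomputable def Pg (t : ℕ) (μ : YoungDiagram) (g : YoungDiagram → ℚ) (n : ℕ) : ℚ :=
  ∑ᶠ lam : YoungDiagram, (numChains t n μ lam : ℚ) * g lam

/-- `ν` is obtained from `μ` by adding a single box. -/
def AddBox (μ ν : YoungDiagram) : Prop :=
  ∃ cell : ℕ × ℕ, cell ∉ μ.cells ∧ ν.cells = insert cell μ.cells

/-- `ν` is obtained from `μ` by adding a single box of content `k`. -/
def AddBoxAt (μ ν : YoungDiagram) (k : ℤ) : Prop :=
  ∃ cell : ℕ × ℕ, cell ∉ μ.cells ∧ ν.cells = insert cell μ.cells ∧ content cell = k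

/-- `μ` has an inner corner of content `k` (a box of content `k` can be added). -/
def InnerCorner (μ : YoungDiagram) (k : ℤ) : Prop :=
  ∃ ν : YoungDiagram, AddBoxAt μ ν k

/-- `μ` has an outer corner of content `k` (a box of content `k` can be removed). -/
def OuterCorner (μ : YoungDiagram) (k : ℤ) : Prop :=
  ∃ ν : YoungDiagram, AddBoxAt ν μ k

/-- `x 0 < x 1 < ⋯ < x m` are the contents of the inner corners of `μ` and
`y 1 < ⋯ < y m` those of the outer corners. -/
def CornerData (μ : YoungDiagram) (m : ℕ) (x y : ℕ → ℤ) : Prop :=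
  (∀ k : ℤ, InnerCorner μ k ↔ ∃ i ≤ m, x i = k) ∧
  (∀ k : ℤ, OuterCorner μ k ↔ ∃ j, 1 ≤ j ∧ j ≤ m ∧ y j = k) ∧
  (∀ i j, i < j → j ≤ m → x i < x j) ∧
  (∀ i j, 1 ≤ i → i < j → j ≤ m → y i < y j)

/-- `q_k = Σ_{i=0}^m x_i^k − Σ_{j=1}^m y_j^k`. -/
def qPow (m : ℕ) (x y : ℕ → ℤ) (k : ℕ) : ℤ :=
  (∑ i ∈ range (m + 1), x i ^ k) - ∑ j ∈ range m, y (j + 1) ^ k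

/-- Size of the `i`-th `t`-quotient of `lam`: boxes of `λ^i` correspond to
pairs `i' < j'` with `i' ≡ j' ≡ i (mod t)`, `z_{i'} = 1`, `z_{j'} = 0`. -/
noncomputable def quotientSize (t : ℕ) (lam : YoungDiagram) (i : ℕ) : ℕ :=
  Set.ncard {p : ℤ × ℤ | p.1 < p.2 ∧ p.1 % (t : ℤ) = (i : ℤ) ∧ p.2 % (t : ℤ) = (i : ℤ) ∧
    ZOne lam p.1 ∧ ¬ ZOne lam p.2}

/-- The multiset of contents of the boxes of `μ`. -/
def contentsMultiset (μ : YoungDiagram) : Multiset ℤ :=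
  μ.cells.val.map content

/-- The number of standard Young tableaux of shape `μ`, given by the
hook length formula `f_μ = |μ|! / H_μ`. -/
def fSYT (μ : YoungDiagram) : ℚ :=
  (Nat.factorial μ.card : ℚ) / Hprod μ

end PaperDefs

open PaperDefs

namespace StmtAux

open PaperDefs

/-- The positions of the 0's in the 01-sequence of `mu`. -/
def zfun (mu : YoungDiagram) (r : ℕ) : ℤ := (mu.rowLen r : ℤ) - (r + 1)

lemma zfun_strictAnti (mu : YoungDiagram) : StrictAnti (zfun mu) := by
  apply strictAnti_nat_of_succ_lt
  intro r
  have := mu.rowLen_anti r (r + 1) (by omega)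
  unfold zfun
  push_cast
  omega

lemma not_zone_iff (mu : YoungDiagram) (j : ℤ) : ¬ ZOne mu j ↔ ∃ r, j = zfun mu r := by
  unfold ZOne zfun
  push_neg
  rfl

lemma rows_finite (mu : YoungDiagram) (k : ℤ) : {r : ℕ | k ≤ zfun mu r}.Finite := by
  apply Set.Finite.subset (Set.finite_Iio ((mu.rowLen 0 : ℤ) - k).toNat)
  intro r hr
  simp only [Set.mem_Iio]
  have h1 : mu.rowLen r ≤ mu.rowLen 0 := mu.rowLen_anti 0 r (Nat.zero_le r)
  have h2 : k ≤ zfun mu r := hr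
  unfold zfun at h2
  omega

/-- The set of zeros of the 01-sequence of `mu` at positions `≥ k`. -/
def Sset (mu : YoungDiagram) (k : ℤ) : Set ℤ := {j : ℤ | k ≤ j ∧ ¬ ZOne mu j}

lemma Sset_eq_image (mu : YoungDiagram) (k : ℤ) :
    Sset mu k = zfun mu '' {r : ℕ | k ≤ zfun mu r} := by
  ext j
  simp only [Sset, Set.mem_setOf_eq, Set.mem_image, not_zone_iff]
  constructor
  · rintro ⟨hk, r, rfl⟩
    exact ⟨r, hk, rfl⟩
  · rintro ⟨r, hr, rfl⟩
    exact ⟨hr, r, rfl⟩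

lemma Sset_finite (mu : YoungDiagram) (k : ℤ) : (Sset mu k).Finite := by
  rw [Sset_eq_image]
  exact (rows_finite mu k).image _

lemma count_contents (mu : YoungDiagram) (k : ℤ) :
    (contentsMultiset mu).count k + (-k).toNat = (Sset mu k).ncard := by
  have h1 : (contentsMultiset mu).count k
      = {r : ℕ | -k ≤ (r : ℤ) ∧ k ≤ zfun mu r}.ncard := by
    unfold contentsMultiset
    rw [Multiset.count_map]
    have himg : {r : ℕ | -k ≤ (r : ℤ) ∧ k ≤ zfun mu r}
        = Prod.fst '' ((mu.cells.filter fun c => content c = k : Finset (ℕ × ℕ)) : Set (ℕ × ℕ)) := by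
      ext r
      simp only [Set.mem_setOf_eq, Set.mem_image, Finset.coe_filter, Prod.exists,
        YoungDiagram.mem_cells]
      constructor
      · rintro ⟨hr1, hr2⟩
        refine ⟨r, (k + r).toNat, ⟨?_, ?_⟩, rfl⟩
        · rw [YoungDiagram.mem_iff_lt_rowLen]
          unfold zfun at hr2
          omega
        · unfold content
          simp only
          omega
      · rintro ⟨a, b, ⟨hmem, hcont⟩, rfl⟩
        rw [YoungDiagram.mem_iff_lt_rowLen] at hmem
        unfold content at hcont
        simp only at hcont
        unfold zfun
        constructor <;> omega
    have hinj : Set.InjOn Prod.fst ((mu.cells.filter fun c => content c = k : Finset (ℕ × ℕ)) : Set (ℕ × ℕ)) := by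
      intro p hp q hq hpq
      simp only [Finset.coe_filter, Set.mem_setOf_eq] at hp hq
      have h1 := hp.2
      have h2 := hq.2
      unfold content at h1 h2
      exact Prod.ext hpq (by omega)
    rw [himg, Set.ncard_image_of_injOn hinj, Set.ncard_coe_finset]
    have hfc : (Multiset.filter (fun a => k = content a) mu.cells.val)
        = Multiset.filter (fun c => content c = k) mu.cells.val :=
      Multiset.filter_congr (fun a _ => eq_comm)
    rw [hfc]
    rfl
  have h2 : {r : ℕ | k ≤ zfun mu r}.ncard
      = (-k).toNat + {r : ℕ | -k ≤ (r : ℤ) ∧ k ≤ zfun mu r}.ncard := by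
    have hsplit : {r : ℕ | k ≤ zfun mu r}
        = ↑(Finset.range (-k).toNat) ∪ {r : ℕ | -k ≤ (r : ℤ) ∧ k ≤ zfun mu r} := by
      ext r
      simp only [Set.mem_union, Set.mem_setOf_eq, Finset.coe_range, Set.mem_Iio]
      have hz : (0 : ℤ) ≤ (mu.rowLen r : ℤ) := by positivity
      unfold zfun
      omega
    rw [hsplit, Set.ncard_union_eq ?disj ?f1 ?f2]
    · rw [Set.ncard_coe_finset, Finset.card_range]
    case disj =>
      rw [Set.disjoint_left]
      intro r hr hr2
      simp only [Finset.coe_range, Set.mem_Iio] at hr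
      have := hr2.1
      omega
    case f1 => exact (Finset.range (-k).toNat).finite_toSet
    case f2 =>
      exact (rows_finite mu k).subset (fun r hr => hr.2)
  have h3 : (Sset mu k).ncard = {r : ℕ | k ≤ zfun mu r}.ncard := by
    rw [Sset_eq_image, Set.ncard_image_of_injOn ((zfun_strictAnti mu).injective.injOn)]
  omega

end StmtAux

open StmtAux


theorem stmt16 (t : ℕ) (ht : 1 ≤ t) (μ lam lamp : YoungDiagram) (hμ : IsTCore t μ)
    (hcore : GEt t μ lam) (i : ℕ) (hi : i < t) (bi : ℤ)
    (hb : IsLeast {j : ℤ | j % (t : ℤ) = (i : ℤ) ∧ ZOne μ j} bi)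
    (c : ℤ)
    (hc0 : ¬ ZOne lam ((c - 1) * (t : ℤ) + bi))
    (hc1 : ZOne lam (c * (t : ℤ) + bi))
    (hflip : ∀ j : ℤ, ZOne lamp j ↔
      (j = (c - 1) * (t : ℤ) + bi ∨ (j ≠ c * (t : ℤ) + bi ∧ ZOne lam j))) :
    contentsMultiset lamp
      = contentsMultiset lam + (Multiset.range t).map (fun j => (t : ℤ) * c + bi - (j : ℤ)) := by
  have ht1 : (1 : ℤ) ≤ (t : ℤ) := by exact_mod_cast ht
  set T : ℤ := (t : ℤ) * c + bi with hT
  have hi0 : (c - 1) * (t : ℤ) + bi = T - t := by rw [hT]; ring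
  have htop : c * (t : ℤ) + bi = T := by rw [hT]; ring
  rw [hi0] at hc0
  rw [htop] at hc1
  simp only [hi0, htop] at hflip
  ext k
  rw [Multiset.count_add]
  -- count of k in the added multiset
  have hrhs : ((Multiset.range t).map fun j => (t : ℤ) * c + bi - (j : ℤ)).count k
      = if T - t < k ∧ k ≤ T then 1 else 0 := by
    have hnorm : ((Multiset.range t).map fun j => (t : ℤ) * c + bi - (j : ℤ))
        = (Multiset.range t).map (fun j : ℕ => (t : ℤ) * c + bi - (j : ℤ)) := by
      show Multiset.map _ ((Multiset.range t).bind (fun a => {(a : ℤ)})) = _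
      rw [Multiset.bind_singleton, Multiset.map_map]
      rfl
    rw [hnorm, Multiset.count_map]
    split_ifs with h
    · have hfc : (Multiset.filter (fun j : ℕ => k = (t : ℤ) * c + bi - (j : ℤ)) (Multiset.range t))
          = Multiset.filter (fun j => j = (T - k).toNat) (Multiset.range t) := by
        apply Multiset.filter_congr
        intro j hj
        rw [Multiset.mem_range] at hj
        constructor <;> intro hh <;> omega
      rw [hfc, Multiset.filter_eq', Multiset.count_eq_one_of_mem (Multiset.nodup_range t)
        (by rw [Multiset.mem_range]; omega)]
      simp
    · have hfc : (Multiset.filter (fun j : ℕ => k = (t : ℤ) * c + bi - (j : ℤ)) (Multiset.range t))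
          = 0 := by
        rw [Multiset.filter_eq_nil]
        intro j hj
        rw [Multiset.mem_range] at hj
        omega
      rw [hfc]
      rfl
  rw [hrhs]
  -- membership in the zero set of lamp
  have hmem : ∀ j : ℤ, j ∈ Sset lamp k ↔ k ≤ j ∧ j ≠ T - t ∧ (j = T ∨ ¬ ZOne lam j) := by
    intro j
    simp only [Sset, Set.mem_setOf_eq, hflip]
    tauto
  have hmemlam : ∀ j : ℤ, j ∈ Sset lam k ↔ k ≤ j ∧ ¬ ZOne lam j := fun j => Iff.rfl
  have hfin := Sset_finite lam k
  have hS : (Sset lamp k).ncard + (if T - t < k ∧ k ≤ T then 0 else 1)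
      = (Sset lam k).ncard + 1 := by
    by_cases h1 : k ≤ T - t
    · have hset : Sset lamp k = insert T (Sset lam k \ {T - t}) := by
        ext j
        rw [hmem, Set.mem_insert_iff, Set.mem_diff, Set.mem_singleton_iff, hmemlam]
        constructor
        · rintro ⟨hk, hne, hTz⟩
          rcases hTz with rfl | hz
          · exact Or.inl rfl
          · exact Or.inr ⟨⟨hk, hz⟩, hne⟩
        · rintro (rfl | ⟨⟨hk, hz⟩, hne⟩)
          · exact ⟨by omega, by omega, Or.inl rfl⟩
          · exact ⟨hk, hne, Or.inr hz⟩
      have hmemT : T - t ∈ Sset lam k := ⟨h1, hc0⟩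
      have hnot : T ∉ Sset lam k \ {T - t} := by
        rintro ⟨⟨_, hz⟩, _⟩
        exact hz hc1
      rw [hset, Set.ncard_insert_of_notMem hnot (hfin.diff (t := {T - t})),
        if_neg (by omega)]
      have := Set.ncard_diff_singleton_add_one hmemT hfin
      omega
    · by_cases h2 : k ≤ T
      · have hset : Sset lamp k = insert T (Sset lam k) := by
          ext j
          rw [hmem, Set.mem_insert_iff, hmemlam]
          constructor
          · rintro ⟨hk, hne, hTz⟩
            rcases hTz with rfl | hz
            · exact Or.inl rfl
            · exact Or.inr ⟨hk, hz⟩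
          · rintro (rfl | ⟨hk, hz⟩)
            · exact ⟨h2, by omega, Or.inl rfl⟩
            · exact ⟨hk, by omega, Or.inr hz⟩
        have hnot : T ∉ Sset lam k := fun hh => hh.2 hc1
        rw [hset, Set.ncard_insert_of_notMem hnot hfin, if_pos (by omega)]
      · have hset : Sset lamp k = Sset lam k := by
          ext j
          rw [hmem, hmemlam]
          constructor
          · rintro ⟨hk, hne, hTz⟩
            rcases hTz with rfl | hz
            · omega
            · exact ⟨hk, hz⟩
          · rintro ⟨hk, hz⟩
            exact ⟨hk, by omega, Or.inr hz⟩
        rw [hset, if_neg (by omega)]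
  have hcl := count_contents lam k
  have hcp := count_contents lamp k
  split_ifs at hS ⊢ with h
  · omega
  · omega
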